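/- arXiv:math/0504041 — 2 statements merged into one kernel-verified Lean document; each statement's English description precedes it below -/
import Mathlib

section
/- Let W be a finite Coxeter group with simple reflections S, longest element w_0, and J ⊆ S with parabolic subgroup W_J. Then the coset W_J w_0 is an upper set in the Bruhat order: if v ∈ W_J and x ∈ W satisfy v w_0 ≤ x in the Bruhat order, then x ∈ W_J w_0. -/
/-- The Bruhat order on a Coxeter group: `x ≤ y` iff some reduced word for `y` contains a
subword whose product is `x`. -/
def bruhatLE {B W : Type*} [Group W] {M : CoxeterMatrix B} (cs : CoxeterSystem M W)
    (x y : W) : Prop :=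
  ∃ ω : List B, cs.IsReduced ω ∧ cs.wordProd ω = y ∧
    ∃ ω' : List B, ω'.Sublist ω ∧ cs.wordProd ω' = x

namespace BruhatAux

open CoxeterSystem List

open scoped Classical

variable {B W : Type*} [Group W] {M : CoxeterMatrix B} (cs : CoxeterSystem M W)

local prefix:100 "s" => cs.simple
local prefix:100 "π" => cs.wordProd
local prefix:100 "ℓ" => cs.length
local prefix:100 "ris" => cs.rightInvSeq

lemma conj_eq_iff (a b t x : W) : (a * t * b = x) ↔ (t = a⁻¹ * x * b⁻¹) := by
  constructor
  · intro h; rw [← h]; group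
  · rintro rfl; group

lemma zmod2_add_self (x : ZMod 2) : x + x = 0 := by revert x; decide

/-- The basic permutation of `W × ZMod 2` associated to a simple reflection. -/
noncomputable def sigmaFun (i : B) : W × ZMod 2 → W × ZMod 2 :=
  fun p => (s i * p.1 * s i, p.2 + if p.1 = s i then 1 else 0)

lemma sigmaFun_involutive (i : B) : Function.Involutive (sigmaFun cs i) := by
  rintro ⟨t, ε⟩
  have h1 : s i * t * s i = s i ↔ t = s i := by
    rw [conj_eq_iff, cs.inv_simple, cs.simple_mul_simple_self, one_mul]
  simp only [sigmaFun, h1, Prod.mk.injEq]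
  constructor
  · rw [← mul_assoc, ← mul_assoc, cs.simple_mul_simple_self, one_mul, mul_assoc,
      cs.simple_mul_simple_self, mul_one]
  · by_cases h : t = s i <;> simp [h, add_assoc, zmod2_add_self]

/-- The permutation of `W × ZMod 2` associated to a simple reflection. -/
noncomputable def sigma (i : B) : Equiv.Perm (W × ZMod 2) := (sigmaFun_involutive cs i).toPerm

lemma sigma_apply (i : B) (t : W) (ε : ZMod 2) :
    sigma cs i (t, ε) = (s i * t * s i, ε + if t = s i then 1 else 0) := rfl

lemma sigma_pow_formula (i j : B) (k : ℕ) (t : W) (ε : ZMod 2) :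
    ((sigma cs i * sigma cs j) ^ k) (t, ε) =
      ((s i * s j) ^ k * t * (s j * s i) ^ k,
        ε + ∑ r ∈ Finset.range (2 * k), (if t = (s j * s i) ^ r * s j then 1 else 0)) := by
  have hg1 : (s i * s j)⁻¹ = s j * s i := by
    rw [mul_inv_rev, cs.inv_simple, cs.inv_simple]
  have hg2 : (s j * s i)⁻¹ = s i * s j := by
    rw [mul_inv_rev, cs.inv_simple, cs.inv_simple]
  induction k generalizing t ε with
  | zero => simp
  | succ k ih =>
    rw [pow_succ, Equiv.Perm.mul_apply, Equiv.Perm.mul_apply, sigma_apply, sigma_apply, ih,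
      Prod.mk.injEq]
    constructor
    · rw [pow_succ (s i * s j) k, pow_succ' (s j * s i) k]
      simp only [mul_assoc]
    · have h2 : 2 * (k + 1) = 2 + 2 * k := by ring
      rw [h2, Finset.sum_range_add]
      have hre : ∀ r : ℕ, (s i * (s j * t * s j) * s i = (s j * s i) ^ r * s j)
          ↔ (t = (s j * s i) ^ (2 + r) * s j) := by
        intro r
        have hassoc : s i * (s j * t * s j) * s i = (s i * s j) * t * (s j * s i) := by
          simp only [mul_assoc]
        have hval : (s j * s i) * ((s j * s i) ^ r * s j) * (s i * s j)
            = (s j * s i) ^ (2 + r) * s j := by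
          rw [show 2 + r = 1 + r + 1 by ring, pow_succ, pow_add, pow_one]
          simp only [mul_assoc]
        rw [hassoc, conj_eq_iff, hg1, hg2, hval]
      have hsum : ∑ r ∈ Finset.range (2 * k),
            (if s i * (s j * t * s j) * s i = (s j * s i) ^ r * s j then (1 : ZMod 2) else 0)
          = ∑ r ∈ Finset.range (2 * k),
            (if t = (s j * s i) ^ (2 + r) * s j then (1 : ZMod 2) else 0) := by
        apply Finset.sum_congr rfl
        intro r _
        simp only [hre r]
      rw [hsum]
      have hr0 : ∑ r ∈ Finset.range 2, (if t = (s j * s i) ^ r * s j then (1 : ZMod 2) else 0)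
          = (if t = s j then 1 else 0) + (if t = s j * s i * s j then 1 else 0) := by
        rw [Finset.sum_range_succ, Finset.sum_range_one]
        simp [pow_one]
      rw [hr0]
      have hcond : (s j * t * s j = s i) ↔ (t = s j * s i * s j) := by
        rw [conj_eq_iff, cs.inv_simple]
      simp only [hcond]
      abel

lemma sigma_liftable : M.IsLiftable (sigma cs) := by
  intro i j
  have hm : (s j * s i) ^ M.M i j = 1 := cs.simple_mul_simple_pow' i j
  have hm2 : (s i * s j) ^ M.M i j = 1 := cs.simple_mul_simple_pow i j
  ext ⟨t, ε⟩
  · rw [sigma_pow_formula]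
    simp [hm, hm2]
  · rw [sigma_pow_formula]
    simp only [Equiv.Perm.one_apply]
    rw [two_mul, Finset.sum_range_add]
    have h3 : ∀ r, ((s j * s i) ^ (M.M i j + r) * s j) = (s j * s i) ^ r * s j := by
      intro r
      rw [pow_add, hm, one_mul]
    simp only [h3]
    generalize (∑ r ∈ Finset.range (M.M i j),
      (if t = (s j * s i) ^ r * s j then (1:ZMod 2) else 0)) = X
    rw [← add_assoc, add_assoc ε, zmod2_add_self, add_zero]

/-- The reflection-cocycle homomorphism `W →* Perm (W × ZMod 2)`. -/
noncomputable def phi : W →* Equiv.Perm (W × ZMod 2) := cs.lift ⟨sigma cs, sigma_liftable cs⟩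

lemma phi_simple (i : B) : phi cs (s i) = sigma cs i := cs.lift_apply_simple (sigma_liftable cs) i

lemma phi_wordProd (ω : List B) (t : W) (ε : ZMod 2) :
    phi cs (π ω) (t, ε) = (π ω * t * (π ω)⁻¹, ε + ((ris ω).count t : ZMod 2)) := by
  induction ω generalizing ε with
  | nil => simp
  | cons i α ih =>
    rw [cs.wordProd_cons, map_mul, Equiv.Perm.mul_apply, ih, phi_simple, sigma_apply,
      Prod.mk.injEq]
    have hc : (π α * t * (π α)⁻¹ = s i) ↔ (t = (π α)⁻¹ * s i * π α) := by
      rw [conj_eq_iff]; simp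
    constructor
    · rw [mul_inv_rev, cs.inv_simple]
      simp only [mul_assoc]
    · have hris : cs.rightInvSeq (i :: α) = ((π α)⁻¹ * s i * π α) :: cs.rightInvSeq α := rfl
      rw [hris, List.count_cons, hc]
      by_cases h : t = (π α)⁻¹ * s i * π α
      · simp only [h, if_pos, beq_iff_eq, if_true]
        push_cast
        ring
      · have h' : ¬ ((π α)⁻¹ * s i * π α == t) := by
          simp only [beq_iff_eq]
          intro hh; exact h hh.symm
        simp only [h, if_neg, not_false_iff, h', if_false]
        push_cast
        ring

/-- The sign cocycle. -/
noncomputable def eta (w t : W) : ZMod 2 := (phi cs w (t, 0)).2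

lemma phi_apply_eq (w t : W) (ε : ZMod 2) :
    phi cs w (t, ε) = (w * t * w⁻¹, ε + eta cs w t) := by
  obtain ⟨ω, rfl⟩ := cs.wordProd_surjective w
  rw [phi_wordProd, eta, phi_wordProd]
  simp

lemma eta_count (ω : List B) (t : W) : eta cs (π ω) t = ((ris ω).count t : ZMod 2) := by
  rw [eta, phi_wordProd]
  simp

lemma eta_mul (u v t : W) : eta cs (u * v) t = eta cs v t + eta cs u (v * t * v⁻¹) := by
  have h1 : phi cs (u * v) (t, 0) = phi cs u (phi cs v (t, 0)) := by
    rw [map_mul, Equiv.Perm.mul_apply]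
  rw [phi_apply_eq, phi_apply_eq, phi_apply_eq] at h1
  have := congrArg Prod.snd h1
  simpa using this

lemma eta_one (t : W) : eta cs 1 t = 0 := by
  have := eta_count cs ([] : List B) t
  simpa using this

lemma eta_simple_self (i : B) : eta cs (s i) (s i) = 1 := by
  have h := eta_count cs [i] (s i)
  rw [cs.wordProd_singleton] at h
  rw [h]
  have hris : cs.rightInvSeq [i] = [s i] := by simp
  rw [hris]
  simp

lemma eta_refl {t : W} (ht : cs.IsReflection t) : eta cs t t = 1 := by
  obtain ⟨u, i, rfl⟩ := ht
  set t := u * s i * u⁻¹ with hts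
  have hti : u⁻¹ * t * (u⁻¹)⁻¹ = s i := by rw [hts]; group
  have step1 : eta cs t t = eta cs u⁻¹ t + eta cs (u * s i) (s i) := by
    nth_rewrite 1 [hts]
    rw [eta_mul cs (u * s i) u⁻¹ t, hti]
  have step2 : eta cs (u * s i) (s i) = eta cs (s i) (s i) + eta cs u (s i) := by
    rw [eta_mul cs u (s i) (s i)]
    congr 1
    rw [cs.inv_simple, cs.simple_mul_simple_self, one_mul]
  have step4 : eta cs u⁻¹ t + eta cs u (s i) = 0 := by
    have h := eta_mul cs u u⁻¹ t
    rw [mul_inv_cancel, eta_one, hti] at h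
    exact h.symm
  rw [step1, step2, eta_simple_self]
  linear_combination step4

lemma eta_inversion {t : W} (ht : cs.IsReflection t) {w : W} (hl : ℓ (w * t) < ℓ w) :
    eta cs w t = 1 := by
  by_contra hne
  have h0 : eta cs w t = 0 := by
    revert hne
    generalize eta cs w t = x
    revert x; decide
  have h1 : eta cs (w * t) t = 1 := by
    rw [eta_mul cs w t t]
    have htt : t * t * t⁻¹ = t := by
      rw [ht.mul_self, one_mul, ht.inv]
    rw [htt, eta_refl cs ht, h0, add_zero]
  obtain ⟨τ, hτred, hτw⟩ := cs.exists_reduced_word' (w * t)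
  have hmem : t ∈ ris τ := by
    by_contra hnm
    have hcount := eta_count cs τ t
    rw [← hτw, h1, List.count_eq_zero.mpr hnm] at hcount
    simp at hcount
  obtain ⟨jj, hjj, hjt⟩ := List.mem_iff_getElem.mp hmem
  have hjj' : jj < τ.length := by
    rwa [cs.length_rightInvSeq] at hjj
  have hprod : π τ * t = π (τ.eraseIdx jj) := by
    rw [← hjt, ← List.getD_eq_getElem _ 1 hjj]
    exact cs.wordProd_mul_getD_rightInvSeq τ jj
  have hww : π (τ.eraseIdx jj) = w := by
    rw [← hprod, ← hτw, mul_assoc, ht.mul_self, mul_one]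
  have hlen : ℓ w ≤ (τ.eraseIdx jj).length := by
    rw [← hww]
    exact cs.length_wordProd_le _
  have hlen2 : (τ.eraseIdx jj).length + 1 = τ.length := List.length_eraseIdx_add_one hjj'
  have hwt : ℓ (w * t) = τ.length := by rw [hτw]; exact hτred
  omega

/-- The strong exchange property. -/
lemma strong_exchange {t : W} (ht : cs.IsReflection t) (ω : List B)
    (hl : ℓ (π ω * t) < ℓ (π ω)) :
    ∃ ω', ω' <+ ω ∧ ω'.length + 1 = ω.length ∧ π ω' = π ω * t := by
  have h1 : eta cs (π ω) t = 1 := eta_inversion cs ht hl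
  have hmem : t ∈ ris ω := by
    by_contra hnm
    have hcount := eta_count cs ω t
    rw [h1, List.count_eq_zero.mpr hnm] at hcount
    simp at hcount
  obtain ⟨jj, hjj, hjt⟩ := List.mem_iff_getElem.mp hmem
  have hjj' : jj < ω.length := by rwa [cs.length_rightInvSeq] at hjj
  refine ⟨ω.eraseIdx jj, List.eraseIdx_sublist ω jj, List.length_eraseIdx_add_one hjj', ?_⟩
  rw [← cs.wordProd_mul_getD_rightInvSeq ω jj, List.getD_eq_getElem _ 1 hjj, hjt]

/-- The deletion property: every word has a reduced sublist with the same product. -/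
lemma deletion (ω : List B) : ∃ σ, σ <+ ω ∧ cs.IsReduced σ ∧ π σ = π ω := by
  generalize hn : ω.length = n
  induction n using Nat.strong_induction_on generalizing ω with
  | _ n ihn =>
  by_cases hred : cs.IsReduced ω
  · exact ⟨ω, List.Sublist.refl ω, hred, rfl⟩
  · have hω0 : ω ≠ [] := by
      rintro rfl
      exact hred (by simp [CoxeterSystem.IsReduced])
    have hlen1 : 1 ≤ ω.length := List.length_pos_iff.mpr hω0
    have hPex : ∃ m, ¬ cs.IsReduced (ω.take (m + 1)) := by
      refine ⟨ω.length - 1, ?_⟩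
      rwa [Nat.sub_add_cancel hlen1, List.take_length]
    set k := Nat.find hPex with hkdef
    have hk : ¬ cs.IsReduced (ω.take (k + 1)) := Nat.find_spec hPex
    have hkmin : ∀ m, m < k → cs.IsReduced (ω.take (m + 1)) := by
      intro m hm
      exact not_not.mp (Nat.find_min hPex hm)
    have hkle : k ≤ ω.length - 1 := Nat.find_le (by
      rwa [Nat.sub_add_cancel hlen1, List.take_length])
    have hklt : k < ω.length := by omega
    have hαred : cs.IsReduced (ω.take k) := by
      rcases Nat.eq_zero_or_pos k with h0 | hpos
      · rw [h0]
        simp [CoxeterSystem.IsReduced]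
      · have := hkmin (k - 1) (by omega)
        rwa [Nat.sub_add_cancel hpos] at this
    set α := ω.take k with hαdef
    have hαlen : α.length = k := by
      rw [hαdef, List.length_take]
      omega
    have htake : ω.take (k + 1) = α ++ [ω[k]] := by
      rw [hαdef, List.take_succ]
      simp [List.getElem?_eq_getElem hklt]
    have hπtake : π (ω.take (k + 1)) = π α * s (ω[k]) := by
      rw [htake, cs.wordProd_append, cs.wordProd_singleton]
    have hℓα : ℓ (π α) = k := by rw [hαred, hαlen]
    have hlt : ℓ (π α * s (ω[k])) < ℓ (π α) := by
      have hne : ℓ (π (ω.take (k + 1))) ≠ (ω.take (k + 1)).length := hk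
      have hlen : (ω.take (k + 1)).length = k + 1 := by
        rw [List.length_take]; omega
      have hdich := cs.length_mul_simple (π α) (ω[k])
      rw [hπtake, hlen] at hne
      omega
    obtain ⟨α', hα'sub, hα'len, hα'π⟩ :=
      strong_exchange cs (cs.isReflection_simple (ω[k])) α hlt
    set ω₂ := α' ++ ω.drop (k + 1) with hω₂def
    have hπω₂ : π ω₂ = π ω := by
      rw [hω₂def, cs.wordProd_append, hα'π, ← hπtake, ← cs.wordProd_append,
        List.take_append_drop]
    have hω₂sub : ω₂ <+ ω := by
      have h1 : α' <+ ω.take (k + 1) := by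
        rw [htake]
        exact hα'sub.trans (List.sublist_append_left _ _)
      have h2 : ω₂ <+ ω.take (k + 1) ++ ω.drop (k + 1) := List.Sublist.append h1 (List.Sublist.refl _)
      rwa [List.take_append_drop] at h2
    have hω₂len : ω₂.length < n := by
      rw [hω₂def, List.length_append, List.length_drop]
      omega
    obtain ⟨σ, hσsub, hσred, hσπ⟩ := ihn ω₂.length hω₂len ω₂ rfl
    exact ⟨σ, hσsub.trans hω₂sub, hσred, by rw [hσπ, hπω₂]⟩

lemma zmod2_cases (x : ZMod 2) : x = 0 ∨ x = 1 := by revert x; decide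

lemma eta_to_inversion {t : W} (ht : cs.IsReflection t) {w : W} (h1 : eta cs w t = 1) :
    cs.IsRightInversion w t := by
  obtain ⟨ω, hred, rfl⟩ := cs.exists_reduced_word' w
  have hcount := eta_count cs ω t
  rw [h1] at hcount
  have hmem : t ∈ ris ω := by
    by_contra hnm
    rw [List.count_eq_zero.mpr hnm] at hcount
    simp at hcount
  exact cs.isRightInversion_of_mem_rightInvSeq hred hmem

lemma length_eq_ncard (w : W) : {t : W | cs.IsRightInversion w t}.ncard = ℓ w := by
  obtain ⟨ω, hred, rfl⟩ := cs.exists_reduced_word' w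
  have hset : {t : W | cs.IsRightInversion (π ω) t} = ↑(ris ω).toFinset := by
    ext t
    simp only [Set.mem_setOf_eq, Finset.coe_sort_coe, List.coe_toFinset, Set.mem_setOf_eq,
      List.mem_toFinset]
    constructor
    · intro h
      have h1 : eta cs (π ω) t = 1 := eta_inversion cs h.1 h.2
      have hcount := eta_count cs ω t
      rw [h1] at hcount
      by_contra hnm
      rw [List.count_eq_zero.mpr hnm] at hcount
      simp at hcount
    · exact fun h => cs.isRightInversion_of_mem_rightInvSeq hred h
  rw [hset]
  rw [Set.ncard_coe_finset, List.toFinset_card_of_nodup hred.nodup_rightInvSeq,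
    cs.length_rightInvSeq, hred]

section Longest

lemma inversion_w0 (w0 : W) (hmax : ∀ w : W, ℓ w ≤ ℓ w0) :
    {t : W | cs.IsRightInversion w0 t} = {t : W | cs.IsReflection t} := by
  ext t
  simp only [Set.mem_setOf_eq]
  constructor
  · exact fun h => h.1
  · intro ht
    exact ⟨ht, lt_of_le_of_ne (hmax _) (ht.length_mul_left_ne w0)⟩

/-- Conjugation by `w0` as an equivalence. -/
def conjw0 (w0 : W) : W ≃ W where
  toFun t := w0 * t * w0⁻¹
  invFun t := w0⁻¹ * t * w0
  left_inv t := by group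
  right_inv t := by group

lemma conjw0_apply (w0 t : W) : conjw0 w0 t = w0 * t * w0⁻¹ := rfl

lemma lengthA [Finite W] (w0 : W) (hmax : ∀ w : W, ℓ w ≤ ℓ w0) (w : W) :
    ℓ (w * w0) + ℓ w = ℓ w0 := by
  have hetaw0 : ∀ t : W, cs.IsReflection t → eta cs w0 t = 1 := by
    intro t ht
    have hinv : cs.IsRightInversion w0 t := by
      have h := inversion_w0 cs w0 hmax
      rw [Set.ext_iff] at h
      exact (h t).mpr ht
    exact eta_inversion cs ht hinv.2
  have key : ∀ t : W, cs.IsRightInversion (w * w0) t ↔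
      cs.IsReflection t ∧ ¬ cs.IsRightInversion w (w0 * t * w0⁻¹) := by
    intro t
    have heta := eta_mul cs w w0 t
    constructor
    · intro h
      refine ⟨h.1, ?_⟩
      have h2 : eta cs (w * w0) t = 1 := eta_inversion cs h.1 h.2
      rw [h2, hetaw0 t h.1, left_eq_add] at heta
      intro hinv
      have h3 : eta cs w (w0 * t * w0⁻¹) = 1 := eta_inversion cs (h.1.conj w0) hinv.2
      rw [h3] at heta
      simp at heta
    · rintro ⟨ht, hninv⟩
      have h0 : eta cs w (w0 * t * w0⁻¹) = 0 := by
        rcases zmod2_cases (eta cs w (w0 * t * w0⁻¹)) with h | h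
        · exact h
        · exact absurd (eta_to_inversion cs (ht.conj w0) h) hninv
      rw [hetaw0 t ht, h0, add_zero] at heta
      exact eta_to_inversion cs ht heta
  have hseteq : {t : W | cs.IsRightInversion (w * w0) t} =
      {t : W | cs.IsReflection t} \ ((conjw0 w0) ⁻¹' {t : W | cs.IsRightInversion w t}) := by
    ext t
    simp only [Set.mem_diff, Set.mem_preimage, Set.mem_setOf_eq, conjw0_apply]
    exact key t
  have hsub : ((conjw0 w0) ⁻¹' {t : W | cs.IsRightInversion w t}) ⊆ {t : W | cs.IsReflection t} := by
    intro t h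
    simp only [Set.mem_preimage, Set.mem_setOf_eq, conjw0_apply] at h
    have h2 := (h.1).conj w0⁻¹
    have h3 : w0⁻¹ * (w0 * t * w0⁻¹) * w0⁻¹⁻¹ = t := by group
    rw [h3] at h2
    exact h2
  have hpre : ((conjw0 w0) ⁻¹' {t : W | cs.IsRightInversion w t}).ncard
      = {t : W | cs.IsRightInversion w t}.ncard := by
    rw [← Equiv.image_symm_eq_preimage]
    exact Set.ncard_image_of_injective _ (conjw0 w0).symm.injective
  have hcalc : ℓ (w * w0) = ℓ w0 - ℓ w := by
    rw [← length_eq_ncard cs (w * w0), hseteq, Set.ncard_diff hsub (Set.toFinite _), hpre,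
      length_eq_ncard cs w]
    congr 1
    rw [← inversion_w0 cs w0 hmax, length_eq_ncard cs w0]
  have := hmax w
  omega

lemma w0_mul_self [Finite W] (w0 : W) (hmax : ∀ w : W, ℓ w ≤ ℓ w0) : w0 * w0 = 1 := by
  have := lengthA cs w0 hmax w0
  have h0 : ℓ (w0 * w0) = 0 := by omega
  exact cs.length_eq_zero_iff.mp h0

lemma w0_inv [Finite W] (w0 : W) (hmax : ∀ w : W, ℓ w ≤ ℓ w0) : w0⁻¹ = w0 :=
  inv_eq_of_mul_eq_one_right (w0_mul_self cs w0 hmax)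

lemma lengthA_left [Finite W] (w0 : W) (hmax : ∀ w : W, ℓ w ≤ ℓ w0) (w : W) :
    ℓ (w0 * w) + ℓ w = ℓ w0 := by
  have h1 : ℓ (w0 * w) = ℓ (w⁻¹ * w0) := by
    rw [← cs.length_inv (w0 * w), mul_inv_rev, w0_inv cs w0 hmax]
  have h2 := lengthA cs w0 hmax w⁻¹
  rw [cs.length_inv] at h2
  omega

end Longest

/-- One step of the Bruhat order: multiply by a reflection on the right, increasing length. -/
def bstep (y w : W) : Prop := ∃ t, cs.IsReflection t ∧ w = y * t ∧ ℓ y < ℓ w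

/-- The Bruhat order, defined via chains of reflections. -/
def chainLe : W → W → Prop := Relation.ReflTransGen (bstep cs)

lemma chainLe_refl (w : W) : chainLe cs w w := Relation.ReflTransGen.refl

lemma chainLe_trans {u v w : W} (h1 : chainLe cs u v) (h2 : chainLe cs v w) :
    chainLe cs u w := Relation.ReflTransGen.trans h1 h2

lemma chainLe_of_bstep {u w : W} (h : bstep cs u w) : chainLe cs u w :=
  Relation.ReflTransGen.single h

lemma chainLe_length_le {u w : W} (h : chainLe cs u w) : ℓ u ≤ ℓ w := by
  induction h with
  | refl => exact le_refl _
  | tail _ hstep ih =>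
    obtain ⟨t, _, _, hlt⟩ := hstep
    omega

lemma chainLe_eq_of_length_ge {u w : W} (h : chainLe cs u w) (hl : ℓ w ≤ ℓ u) : u = w := by
  rcases Relation.ReflTransGen.cases_tail h with h1 | ⟨c, hc, hstep⟩
  · exact h1.symm
  · obtain ⟨t, _, _, hlt⟩ := hstep
    have := chainLe_length_le cs hc
    omega

/-- One-step subword property. -/
lemma bstep_subword {y w : W} (h : bstep cs y w) (ω : List B) (hred : cs.IsReduced ω)
    (hπ : π ω = w) : ∃ σ, σ <+ ω ∧ cs.IsReduced σ ∧ π σ = y := by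
  obtain ⟨t, ht, hw, hlt⟩ := h
  have htw : π ω * t = y := by
    rw [hπ, hw, mul_assoc, ht.mul_self, mul_one]
  have hlt2 : ℓ (π ω * t) < ℓ (π ω) := by
    rw [htw, hπ]
    exact hlt
  obtain ⟨ω₂, hω₂sub, _, hω₂π⟩ := strong_exchange cs ht ω hlt2
  obtain ⟨σ, hσsub, hσred, hσπ⟩ := deletion cs ω₂
  exact ⟨σ, hσsub.trans hω₂sub, hσred, by rw [hσπ, hω₂π, htw]⟩

/-- Chain order implies the subword property with respect to every reduced word. -/
lemma chainLe_subword {u w : W} (h : chainLe cs u w) :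
    ∀ ω, cs.IsReduced ω → π ω = w → ∃ σ, σ <+ ω ∧ cs.IsReduced σ ∧ π σ = u := by
  induction h with
  | refl =>
    intro ω hred hπ
    obtain ⟨σ, hσsub, hσred, hσπ⟩ := deletion cs ω
    exact ⟨σ, hσsub, hσred, by rw [hσπ, hπ]⟩
  | tail _ hstep ih =>
    intro ω hred hπ
    obtain ⟨ψ, hψsub, hψred, hψπ⟩ := bstep_subword cs hstep ω hred hπ
    obtain ⟨σ, hσsub, hσred, hσπ⟩ := ih ψ hψred hψπ
    exact ⟨σ, hσsub.trans hψsub, hσred, hσπ⟩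

lemma sublist_concat_cases {σ ω₁ : List B} {i : B} (h : σ <+ ω₁ ++ [i]) :
    σ <+ ω₁ ∨ ∃ σ₁, σ = σ₁ ++ [i] ∧ σ₁ <+ ω₁ := by
  have h2 : σ.reverse <+ i :: ω₁.reverse := by
    have := h.reverse
    simpa using this
  rcases List.sublist_cons_iff.mp h2 with h3 | ⟨r, hr, hrsub⟩
  · left
    have := h3.reverse
    simpa using this
  · right
    refine ⟨r.reverse, ?_, ?_⟩
    · have := congrArg List.reverse hr
      simpa using this
    · have := hrsub.reverse
      simpa using this

lemma isReduced_concat_left {ω₁ : List B} {i : B} (h : cs.IsReduced (ω₁ ++ [i])) :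
    cs.IsReduced ω₁ := by
  have := h.take ω₁.length
  rwa [List.take_left] at this

/-- The joint induction: subword implies chain (C1), together with the two lifting
lemmas (M) and (N). -/
lemma CMN : ∀ n : ℕ,
    (∀ ω : List B, ω.length ≤ n → cs.IsReduced ω → ∀ σ, σ <+ ω →
      chainLe cs (π σ) (π ω)) ∧
    (∀ w : W, ℓ w ≤ n → ∀ u, chainLe cs u w → ∀ i : B, ℓ u < ℓ (u * s i) →
      ℓ w < ℓ (w * s i) → chainLe cs (u * s i) (w * s i)) ∧
    (∀ z : W, ℓ z ≤ n → ∀ u, chainLe cs u z → ∀ i : B, ℓ u < ℓ (u * s i) →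
      ℓ (z * s i) < ℓ z → chainLe cs (u * s i) z) := by
  intro n
  induction n with
  | zero =>
    refine ⟨?_, ?_, ?_⟩
    · intro ω hlen _ σ hsub
      have hω : ω = [] := List.length_eq_zero_iff.mp (by omega)
      subst hω
      rw [List.sublist_nil.mp hsub]
      exact chainLe_refl cs _
    · intro w hw u hchain i hu hwi
      have hw1 : w = 1 := cs.length_eq_zero_iff.mp (by omega)
      have hu1 : u = w := by
        apply chainLe_eq_of_length_ge cs hchain
        omega
      rw [hu1]
      exact chainLe_refl cs _
    · intro z hz u hchain i hu hzs
      omega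
  | succ n ihn =>
    obtain ⟨C1n, Mn, Nn⟩ := ihn
    have M : ∀ w : W, ℓ w ≤ n + 1 → ∀ u, chainLe cs u w → ∀ i : B, ℓ u < ℓ (u * s i) →
        ℓ w < ℓ (w * s i) → chainLe cs (u * s i) (w * s i) := by
      intro w hw u hchain i hu hwi
      rcases Relation.ReflTransGen.cases_tail hchain with heq | ⟨z, huz, hstep⟩
      · rw [heq]
        exact chainLe_refl cs _
      · obtain ⟨t, ht, hwz, hlt⟩ := hstep
        have hzn : ℓ z ≤ n := by omega
        by_cases hzs : ℓ z < ℓ (z * s i)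
        · have h1 : chainLe cs (u * s i) (z * s i) := Mn z hzn u huz i hu hzs
          have h2 : bstep cs (z * s i) (w * s i) := by
            refine ⟨s i * t * s i, ?_, ?_, ?_⟩
            · have := ht.conj (s i)
              rwa [cs.inv_simple] at this
            · rw [hwz]
              simp only [mul_assoc]
              rw [cs.simple_mul_simple_cancel_left]
            · have hle : ℓ (z * s i) ≤ ℓ z + 1 := by
                have := cs.length_mul_le z (s i)
                rwa [cs.length_simple] at this
              omega
          exact Relation.ReflTransGen.tail h1 h2
        · have hzs' : ℓ (z * s i) < ℓ z := by
            have := cs.length_mul_simple_ne z i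
            omega
          have h1 : chainLe cs (u * s i) z := Nn z hzn u huz i hu hzs'
          have h2 : bstep cs z w := ⟨t, ht, hwz, hlt⟩
          have h3 : bstep cs w (w * s i) :=
            ⟨s i, cs.isReflection_simple i, rfl, hwi⟩
          exact Relation.ReflTransGen.tail (Relation.ReflTransGen.tail h1 h2) h3
    have N : ∀ z : W, ℓ z ≤ n + 1 → ∀ u, chainLe cs u z → ∀ i : B, ℓ u < ℓ (u * s i) →
        ℓ (z * s i) < ℓ z → chainLe cs (u * s i) z := by
      intro z hz u hchain i hu hzs
      have hzsi : ℓ (z * s i) + 1 = ℓ z := by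
        have := cs.length_mul_simple z i
        omega
      obtain ⟨τ, hτred, hτπ⟩ := cs.exists_reduced_word' (z * s i)
      have hτlen : τ.length = ℓ (z * s i) := by rw [← hτred, ← hτπ]
      have hzword : π (τ ++ [i]) = z := by
        rw [cs.wordProd_append, cs.wordProd_singleton, ← hτπ, mul_assoc,
          cs.simple_mul_simple_self, mul_one]
      have hzred : cs.IsReduced (τ ++ [i]) := by
        show ℓ (π (τ ++ [i])) = _
        rw [hzword, List.length_append, List.length_singleton, hτlen]
        omega
      obtain ⟨σ, hσsub, hσred, hσπ⟩ := chainLe_subword cs hchain (τ ++ [i]) hzred hzword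
      rcases sublist_concat_cases hσsub with hcase | ⟨σ₁, hσeq, hσ₁sub⟩
      · have h1 : chainLe cs u (z * s i) := by
          have := C1n τ (by omega) hτred σ hcase
          rwa [hσπ, ← hτπ] at this
        have h2 : chainLe cs (u * s i) ((z * s i) * s i) := by
          apply Mn (z * s i) (by omega) u h1 i hu
          rw [mul_assoc, cs.simple_mul_simple_self, mul_one]
          omega
        rwa [mul_assoc, cs.simple_mul_simple_self, mul_one] at h2
      · have hπσ₁ : π σ₁ = u * s i := by
          have h5 : π σ = π σ₁ * s i := by
            rw [hσeq, cs.wordProd_append, cs.wordProd_singleton]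
          rw [hσπ] at h5
          rw [h5, mul_assoc, cs.simple_mul_simple_self, mul_one]
        have h1 : chainLe cs (u * s i) (z * s i) := by
          have := C1n τ (by omega) hτred σ₁ hσ₁sub
          rwa [hπσ₁, ← hτπ] at this
        have h2 : bstep cs (z * s i) z := by
          refine ⟨s i, cs.isReflection_simple i, ?_, hzs⟩
          rw [mul_assoc, cs.simple_mul_simple_self, mul_one]
        exact Relation.ReflTransGen.tail h1 h2
    have C1 : ∀ ω : List B, ω.length ≤ n + 1 → cs.IsReduced ω → ∀ σ, σ <+ ω →
        chainLe cs (π σ) (π ω) := by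
      intro ω hlen hred σ hsub
      obtain ⟨σ', hσ'sub, hσ'red, hσ'π⟩ := deletion cs σ
      rw [← hσ'π]
      have hsub' := hσ'sub.trans hsub
      rcases List.eq_nil_or_concat ω with rfl | ⟨ω₁, i, rfl⟩
      · rw [List.sublist_nil.mp hsub']
        exact chainLe_refl cs _
      · rw [List.concat_eq_append] at hsub' hred hlen ⊢
        have hred₁ : cs.IsReduced ω₁ := isReduced_concat_left cs hred
        have hlen₁ : ω₁.length ≤ n := by
          rw [List.length_append, List.length_singleton] at hlen
          omega
        have hπω : π (ω₁ ++ [i]) = π ω₁ * s i := by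
          rw [cs.wordProd_append, cs.wordProd_singleton]
        have hℓω : ℓ (π (ω₁ ++ [i])) = ω₁.length + 1 := by
          rw [hred, List.length_append, List.length_singleton]
        have hℓω₁ : ℓ (π ω₁) = ω₁.length := hred₁
        rcases sublist_concat_cases hsub' with hc | ⟨σ₁, hσeq, hσ₁sub⟩
        · have h1 : chainLe cs (π σ') (π ω₁) := C1n ω₁ hlen₁ hred₁ σ' hc
          have h2 : bstep cs (π ω₁) (π (ω₁ ++ [i])) := by
            refine ⟨s i, cs.isReflection_simple i, hπω, ?_⟩
            omega
          exact Relation.ReflTransGen.tail h1 h2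
        · subst hσeq
          have hσ₁red : cs.IsReduced σ₁ := isReduced_concat_left cs hσ'red
          have hπσ' : π (σ₁ ++ [i]) = π σ₁ * s i := by
            rw [cs.wordProd_append, cs.wordProd_singleton]
          have hℓσ' : ℓ (π (σ₁ ++ [i])) = σ₁.length + 1 := by
            rw [hσ'red, List.length_append, List.length_singleton]
          have hℓσ₁ : ℓ (π σ₁) = σ₁.length := hσ₁red
          have h1 : chainLe cs (π σ₁) (π ω₁) := C1n ω₁ hlen₁ hred₁ σ₁ hσ₁sub
          have h2 : chainLe cs (π σ₁ * s i) (π ω₁ * s i) := by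
            apply M (π ω₁) (by omega) (π σ₁) h1 i
            · rw [← hπσ']
              omega
            · rw [← hπω]
              omega
          rwa [← hπσ', ← hπω] at h2
    exact ⟨C1, M, N⟩

lemma subword_chainLe {ω σ : List B} (hred : cs.IsReduced ω) (hsub : σ <+ ω) :
    chainLe cs (π σ) (π ω) :=
  (CMN cs ω.length).1 ω le_rfl hred σ hsub

lemma liftM {u w : W} (h : chainLe cs u w) (i : B) (hu : ℓ u < ℓ (u * s i))
    (hw : ℓ w < ℓ (w * s i)) : chainLe cs (u * s i) (w * s i) :=
  (CMN cs (ℓ w)).2.1 w le_rfl u h i hu hw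

lemma liftN {u z : W} (h : chainLe cs u z) (i : B) (hu : ℓ u < ℓ (u * s i))
    (hz : ℓ (z * s i) < ℓ z) : chainLe cs (u * s i) z :=
  (CMN cs (ℓ z)).2.2 z le_rfl u h i hu hz

section MainArg

variable [Finite W]

lemma chainLe_w0_swap (w0 : W) (hmax : ∀ w : W, ℓ w ≤ ℓ w0) :
    ∀ n (a b : W), ℓ a ≤ n → chainLe cs (w0 * a) b → chainLe cs (w0 * b) a := by
  intro n
  induction n with
  | zero =>
    intro a b ha hab
    have ha1 : a = 1 := cs.length_eq_zero_iff.mp (by omega)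
    subst ha1
    rw [mul_one] at hab
    have hb : w0 = b := chainLe_eq_of_length_ge cs hab (hmax b)
    rw [← hb, w0_mul_self cs w0 hmax]
    exact chainLe_refl cs 1
  | succ n ih =>
    intro a b ha hab
    by_cases han : ℓ a ≤ n
    · exact ih a b han hab
    have ha1 : a ≠ 1 := by
      intro h
      rw [h, cs.length_one] at han
      omega
    obtain ⟨i, hi⟩ := cs.exists_rightDescent_of_ne_one ha1
    have hdesc : ℓ (a * s i) < ℓ a := hi
    have hA := lengthA_left cs w0 hmax a
    have hA' := lengthA_left cs w0 hmax (a * s i)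
    have hassoc : (w0 * a) * s i = w0 * (a * s i) := by rw [mul_assoc]
    have hup : ℓ (w0 * a) < ℓ ((w0 * a) * s i) := by
      rw [hassoc]
      omega
    have hcancel_a : (a * s i) * s i = a := by
      rw [mul_assoc, cs.simple_mul_simple_self, mul_one]
    rcases lt_or_gt_of_ne (cs.length_mul_simple_ne b i) with hbs | hbs
    · -- descent of b
      have h1 := liftN cs hab i hup hbs
      rw [hassoc] at h1
      have h2 := ih (a * s i) b (by omega) h1
      refine Relation.ReflTransGen.tail h2 ⟨s i, cs.isReflection_simple i, ?_, hdesc⟩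
      rw [hcancel_a]
    · -- ascent of b
      have h1 := liftM cs hab i hup hbs
      rw [hassoc] at h1
      have h2 := ih (a * s i) (b * s i) (by omega) h1
      have hcancel_b : (w0 * (b * s i)) * s i = w0 * b := by
        simp only [mul_assoc]
        rw [cs.simple_mul_simple_self, mul_one]
      have hBsum := lengthA_left cs w0 hmax b
      have hBsum' := lengthA_left cs w0 hmax (b * s i)
      have hbslen : ℓ (b * s i) = ℓ b + 1 := by
        have := cs.length_mul_simple b i
        omega
      have h3 := liftM cs h2 i ?_ ?_
      · rw [hcancel_b, hcancel_a] at h3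
        exact h3
      · rw [hcancel_b]
        omega
      · rw [hcancel_a]
        exact hdesc

lemma word_of_mem_closure {J : Set B} {c : W}
    (hc : c ∈ Subgroup.closure (cs.simple '' J)) :
    ∃ lam : List B, (∀ b ∈ lam, b ∈ J) ∧ π lam = c := by
  induction hc using Subgroup.closure_induction with
  | mem x hx =>
    obtain ⟨b, hb, rfl⟩ := hx
    exact ⟨[b], by simpa using hb, cs.wordProd_singleton b⟩
  | one => exact ⟨[], by simp, cs.wordProd_nil⟩
  | mul x y' hx hy' ihx ihy =>
    obtain ⟨l1, hl1, hπ1⟩ := ihx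
    obtain ⟨l2, hl2, hπ2⟩ := ihy
    refine ⟨l1 ++ l2, ?_, ?_⟩
    · intro b hb
      rcases List.mem_append.mp hb with h | h
      · exact hl1 b h
      · exact hl2 b h
    · rw [cs.wordProd_append, hπ1, hπ2]
  | inv x hx ihx =>
    obtain ⟨l1, hl1, hπ1⟩ := ihx
    refine ⟨l1.reverse, ?_, ?_⟩
    · intro b hb
      exact hl1 b (List.mem_reverse.mp hb)
    · rw [cs.wordProd_reverse, hπ1]

lemma chainLe_mem_closure {J : Set B} {c y : W}
    (hc : c ∈ Subgroup.closure (cs.simple '' J)) (h : chainLe cs y c) :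
    y ∈ Subgroup.closure (cs.simple '' J) := by
  obtain ⟨lam, hlamJ, hlamπ⟩ := word_of_mem_closure cs hc
  obtain ⟨lam', hlam'sub, hlam'red, hlam'π⟩ := deletion cs lam
  rw [hlamπ] at hlam'π
  obtain ⟨σ, hσsub, _, hσπ⟩ := chainLe_subword cs h lam' hlam'red hlam'π
  rw [← hσπ]
  have hprod : π σ = (σ.map cs.simple).prod := rfl
  rw [hprod]
  apply Subgroup.list_prod_mem
  intro g hg
  obtain ⟨b, hb, rfl⟩ := List.mem_map.mp hg
  apply Subgroup.subset_closure
  exact ⟨b, hlamJ b (hlam'sub.subset (hσsub.subset hb)), rfl⟩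

end MainArg

end BruhatAux

/-- In a finite Coxeter group with longest element `w₀` and standard parabolic subgroup
`W_J`, the coset `W_J w₀` is an upper set in the Bruhat order: if `v ∈ W_J` and
`v w₀ ≤ x`, then `x ∈ W_J w₀`. -/
theorem coset_longestElement_upperSet {B W : Type*} [Group W] [Finite W]
    (M : CoxeterMatrix B) (cs : CoxeterSystem M W)
    (w0 : W) (hmax : ∀ w : W, cs.length w ≤ cs.length w0) (J : Set B)
    (v x : W) (hv : v ∈ Subgroup.closure (cs.simple '' J))
    (h : bruhatLE cs (v * w0) x) :
    ∃ u ∈ Subgroup.closure (cs.simple '' J), x = u * w0 := by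
  classical
  obtain ⟨ω, hred, hπ, ω', hsub, hπ'⟩ := h
  have hch : BruhatAux.chainLe cs ((v * w0)⁻¹) x⁻¹ := by
    have h1 := BruhatAux.subword_chainLe cs ((cs.isReduced_reverse_iff ω).mpr hred) hsub.reverse
    rwa [cs.wordProd_reverse, cs.wordProd_reverse, hπ, hπ'] at h1
  rw [mul_inv_rev, BruhatAux.w0_inv cs w0 hmax] at hch
  have hG := BruhatAux.chainLe_w0_swap cs w0 hmax (cs.length v⁻¹) v⁻¹ x⁻¹ le_rfl hch
  have hmem : w0 * x⁻¹ ∈ Subgroup.closure (cs.simple '' J) :=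
    BruhatAux.chainLe_mem_closure cs (inv_mem hv) hG
  refine ⟨(w0 * x⁻¹)⁻¹, inv_mem hmem, ?_⟩
  rw [mul_inv_rev, inv_inv, BruhatAux.w0_inv cs w0 hmax, mul_assoc,
    BruhatAux.w0_mul_self cs w0 hmax, mul_one]
end

section
/- Let M, X, Y be g-modules fitting into a short exact sequence 0 → X → M → Y → 0 such that for every finite-dimensional g-module V the induced map Hom_g(M, M ⊗ V) → Hom_g(M, Y ⊗ V) is surjective. If the canonical map U(g) → L(M,M) is surjective and the inclusion X → M induces an embedding of L(Y,Y) into L(M,Y) (via composition with the projection M → Y), then the canonical injection U(g)/Ann(Y) → L(Y,Y) is surjective. -/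
open TensorProduct

/-- The locally finite part of `Hom_ℂ(A,B)` under the action `(x·f)(a) = x·f(a) - f(x·a)`. -/
def locFin (g : Type*) [LieRing g] [LieAlgebra ℂ g]
    (A B : Type*) [AddCommGroup A] [Module ℂ A] [LieRingModule g A] [LieModule ℂ g A]
    [AddCommGroup B] [Module ℂ B] [LieRingModule g B] [LieModule ℂ g B] :
    Set (A →ₗ[ℂ] B) :=
  {f | ∃ W : Submodule ℂ (A →ₗ[ℂ] B),
    FiniteDimensional ℂ W ∧ f ∈ W ∧ ∀ (x : g), ∀ h ∈ W, ⁅x, h⁆ ∈ W}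

/-- The representation map `U(g) → End_ℂ(A)` of a `g`-module `A`. -/
noncomputable def rho (g : Type*) [LieRing g] [LieAlgebra ℂ g]
    (A : Type*) [AddCommGroup A] [Module ℂ A] [LieRingModule g A] [LieModule ℂ g A] :
    UniversalEnvelopingAlgebra ℂ g →ₐ[ℂ] Module.End ℂ A :=
  UniversalEnvelopingAlgebra.lift ℂ (LieModule.toEnd ℂ g A)

set_option synthInstance.maxHeartbeats 1000000 in
set_option maxHeartbeats 1000000 in
/-- A `g`-module surjection intertwines the `U(g)`-actions. -/
theorem rho_intertwine (g : Type*) [LieRing g] [LieAlgebra ℂ g]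
    (M Y : Type*)
    [AddCommGroup M] [Module ℂ M] [LieRingModule g M] [LieModule ℂ g M]
    [AddCommGroup Y] [Module ℂ Y] [LieRingModule g Y] [LieModule ℂ g Y]
    (pr : M →ₗ⁅ℂ,g⁆ Y) (u : UniversalEnvelopingAlgebra ℂ g) (m : M) :
    pr (rho g M u m) = rho g Y u (pr m) := by
  let S : Subalgebra ℂ (Module.End ℂ M × Module.End ℂ Y) :=
  { carrier := {p | ∀ m : M, pr (p.1 m) = p.2 (pr m)},
    mul_mem' := by
      intro a b ha hb m
      change pr (a.1 (b.1 m)) = a.2 (b.2 (pr m))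
      rw [ha, hb]
    add_mem' := by
      intro a b ha hb m
      change pr (a.1 m + b.1 m) = a.2 (pr m) + b.2 (pr m)
      rw [map_add pr, ha, hb]
    algebraMap_mem' := by
      intro c m
      change pr (c • m) = c • pr m
      rw [map_smul pr] }
  letI : LieRing S := LieRing.ofAssociativeRing
  letI : LieRing (Module.End ℂ M) := LieRing.ofAssociativeRing
  letI : LieRing (Module.End ℂ Y) := LieRing.ofAssociativeRing
  let j : g →ₗ⁅ℂ⁆ S :=
  { toFun := fun x => ⟨(LieModule.toEnd ℂ g M x, LieModule.toEnd ℂ g Y x),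
      fun m => by simpa using pr.map_lie x m⟩
    map_add' := by intro x y; ext <;> simp
    map_smul' := by intro c x; ext <;> simp
    map_lie' := by
      intro x y
      apply Subtype.ext
      apply Prod.ext
      · show LieModule.toEnd ℂ g M ⁅x, y⁆ = _
        rw [LieHom.map_lie]; rfl
      · show LieModule.toEnd ℂ g Y ⁅x, y⁆ = _
        rw [LieHom.map_lie]; rfl }
  let Φ := UniversalEnvelopingAlgebra.lift ℂ j
  have h1 : ((AlgHom.fst ℂ (Module.End ℂ M) (Module.End ℂ Y)).comp
      (S.val.comp Φ)) = rho g M := by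
    apply UniversalEnvelopingAlgebra.hom_ext
    apply LieHom.ext
    intro x
    show (AlgHom.fst ℂ (Module.End ℂ M) (Module.End ℂ Y))
        (S.val (UniversalEnvelopingAlgebra.lift ℂ j (UniversalEnvelopingAlgebra.ι ℂ x))) =
      UniversalEnvelopingAlgebra.lift ℂ (LieModule.toEnd ℂ g M)
        (UniversalEnvelopingAlgebra.ι ℂ x)
    rw [UniversalEnvelopingAlgebra.lift_ι_apply, UniversalEnvelopingAlgebra.lift_ι_apply]
    rfl
  have h2 : ((AlgHom.snd ℂ (Module.End ℂ M) (Module.End ℂ Y)).comp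
      (S.val.comp Φ)) = rho g Y := by
    apply UniversalEnvelopingAlgebra.hom_ext
    apply LieHom.ext
    intro x
    show (AlgHom.snd ℂ (Module.End ℂ M) (Module.End ℂ Y))
        (S.val (UniversalEnvelopingAlgebra.lift ℂ j (UniversalEnvelopingAlgebra.ι ℂ x))) =
      UniversalEnvelopingAlgebra.lift ℂ (LieModule.toEnd ℂ g Y)
        (UniversalEnvelopingAlgebra.ι ℂ x)
    rw [UniversalEnvelopingAlgebra.lift_ι_apply, UniversalEnvelopingAlgebra.lift_ι_apply]
    rfl
  have key : ∀ m : M, pr ((Φ u).val.1 m) = (Φ u).val.2 (pr m) := (Φ u).property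
  have e1 : rho g M u = (Φ u).val.1 := by rw [← h1]; rfl
  have e2 : rho g Y u = (Φ u).val.2 := by rw [← h2]; rfl
  rw [e1, e2]; exact key m

set_option maxHeartbeats 2000000 in
set_option synthInstance.maxHeartbeats 1000000 in
/-- Let `0 → X → M → Y → 0` be a short exact sequence of `g`-modules such that for every
finite-dimensional `g`-module `V` the induced map `Hom_g(M, M ⊗ V) → Hom_g(M, Y ⊗ V)` is
surjective. If the canonical map `U(g) → L(M,M)` is surjective and composition with the
projection `M → Y` embeds `L(Y,Y)` into `L(M,Y)`, then the canonical injection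
`U(g)/Ann(Y) → L(Y,Y)` is surjective. -/
theorem kostant_of_quotient
    (g : Type*) [LieRing g] [LieAlgebra ℂ g] [FiniteDimensional ℂ g]
    [LieAlgebra.IsSemisimple ℂ g]
    (X M Y : Type*)
    [AddCommGroup X] [Module ℂ X] [LieRingModule g X] [LieModule ℂ g X]
    [AddCommGroup M] [Module ℂ M] [LieRingModule g M] [LieModule ℂ g M]
    [AddCommGroup Y] [Module ℂ Y] [LieRingModule g Y] [LieModule ℂ g Y]
    -- the short exact sequence `0 → X → M → Y → 0`
    (i : X →ₗ⁅ℂ,g⁆ M) (pr : M →ₗ⁅ℂ,g⁆ Y)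
    (hi : Function.Injective i) (hpr : Function.Surjective pr)
    (hexact : ∀ m : M, pr m = 0 ↔ ∃ x : X, i x = m)
    -- for every finite-dimensional `V`, `Hom_g(M, M ⊗ V) → Hom_g(M, Y ⊗ V)` is surjective
    (hsurjV : ∀ (V : Type*) [AddCommGroup V] [Module ℂ V] [LieRingModule g V]
      [LieModule ℂ g V], FiniteDimensional ℂ V →
      ∀ f : M →ₗ⁅ℂ,g⁆ Y ⊗[ℂ] V, ∃ F : M →ₗ⁅ℂ,g⁆ M ⊗[ℂ] V,
        ∀ m : M, TensorProduct.map (pr : M →ₗ[ℂ] Y) LinearMap.id (F m) = f m)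
    -- the canonical map `U(g) → L(M,M)` is surjective
    (hM : ∀ f ∈ locFin g M M, ∃ u : UniversalEnvelopingAlgebra ℂ g, rho g M u = f)
    -- composition with `pr : M → Y` embeds `L(Y,Y)` into `L(M,Y)`
    (hembed : Set.MapsTo (fun f : Y →ₗ[ℂ] Y => f ∘ₗ (pr : M →ₗ[ℂ] Y))
        (locFin g Y Y) (locFin g M Y) ∧
      Set.InjOn (fun f : Y →ₗ[ℂ] Y => f ∘ₗ (pr : M →ₗ[ℂ] Y)) (locFin g Y Y)) :
    -- then the canonical injection `U(g)/Ann(Y) → L(Y,Y)` is surjective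
    ∀ f ∈ locFin g Y Y, ∃ u : UniversalEnvelopingAlgebra ℂ g, rho g Y u = f := by
  intro f hf
  obtain ⟨W0, hW0fin, hfW0, hW0inv⟩ := hf
  let W : LieSubmodule ℂ g (Y →ₗ[ℂ] Y) :=
    { W0 with lie_mem := fun {x h} hh => hW0inv x h hh }
  haveI hWfin : FiniteDimensional ℂ W := hW0fin
  let V := Module.Dual ℂ W
  let ev : Y →ₗ[ℂ] (W →ₗ[ℂ] Y) := (W.toSubmodule.subtype).flip
  have hev_apply : ∀ (y : Y) (w : W), ev y w = (w : Y →ₗ[ℂ] Y) y := fun _ _ => rfl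
  let e : Y ⊗[ℂ] V ≃ₗ[ℂ] (W →ₗ[ℂ] Y) :=
    (TensorProduct.comm ℂ Y V).trans (dualTensorHomEquiv ℂ W Y)
  have he_tmul : ∀ (y : Y) (φ : V) (w : W), e (y ⊗ₜ φ) w = φ w • y := by
    intro y φ w
    simp only [e, LinearEquiv.trans_apply, TensorProduct.comm_tmul, dualTensorHomEquiv,
      dualTensorHomEquivOfBasis_apply, dualTensorHom_apply]
    rfl
  have he : ∀ (x : g) (t : Y ⊗[ℂ] V), e ⁅x, t⁆ = ⁅x, e t⁆ := by
    intro x t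
    induction t using TensorProduct.induction_on with
    | zero => simp
    | tmul y φ =>
      ext w
      rw [LieModule.lie_tmul_right, map_add, LinearMap.add_apply, he_tmul, he_tmul,
        LieHom.lie_apply, he_tmul, he_tmul, Module.Dual.lie_apply, lie_smul]
      module
    | add a b ha hb => rw [lie_add, map_add, map_add, ha, hb, lie_add]
  have hesymm : ∀ (x : g) (h : W →ₗ[ℂ] Y), e.symm ⁅x, h⁆ = ⁅x, e.symm h⁆ := by
    intro x h
    apply e.injective
    rw [e.apply_symm_apply, he, e.apply_symm_apply]
  have hev : ∀ (x : g) (y : Y), ev ⁅x, y⁆ = ⁅x, ev y⁆ := by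
    intro x y
    ext w
    have hw : ((⁅x, w⁆ : W) : Y →ₗ[ℂ] Y) = ⁅x, (w : Y →ₗ[ℂ] Y)⁆ := rfl
    rw [LieHom.lie_apply, hev_apply, hev_apply, hev_apply, hw, LieHom.lie_apply]
    abel
  let ψ : M →ₗ⁅ℂ,g⁆ Y ⊗[ℂ] V :=
  { toLinearMap := (e.symm.toLinearMap ∘ₗ ev) ∘ₗ (pr : M →ₗ[ℂ] Y)
    map_lie' := by
      intro x m
      show e.symm (ev (pr ⁅x, m⁆)) = ⁅x, e.symm (ev (pr m))⁆
      rw [pr.map_lie, hev, hesymm] }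
  -- transport `V` to the universe quantified in `hsurjV`
  let n := Module.finrank ℂ V
  let τ : ULift (Fin n → ℂ) ≃ₗ[ℂ] V :=
    (ULift.moduleEquiv : ULift (Fin n → ℂ) ≃ₗ[ℂ] (Fin n → ℂ)).trans
      (Module.finBasis ℂ V).equivFun.symm
  letI : LieRingModule g (ULift (Fin n → ℂ)) :=
  { bracket := fun x v => τ.symm ⁅x, τ v⁆
    add_lie := fun x y v => by show τ.symm _ = τ.symm _ + τ.symm _; rw [add_lie, map_add]
    lie_add := fun x v w => by
      show τ.symm ⁅x, τ (v + w)⁆ = τ.symm ⁅x, τ v⁆ + τ.symm ⁅x, τ w⁆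
      rw [map_add, lie_add, map_add]
    leibniz_lie := fun x y v => by
      show τ.symm ⁅x, τ (τ.symm ⁅y, τ v⁆)⁆ =
        τ.symm ⁅⁅x, y⁆, τ v⁆ + τ.symm ⁅y, τ (τ.symm ⁅x, τ v⁆)⁆
      rw [τ.apply_symm_apply, τ.apply_symm_apply, ← map_add, ← leibniz_lie] }
  letI : LieModule ℂ g (ULift (Fin n → ℂ)) :=
  { smul_lie := fun c x v => by
      show τ.symm ⁅c • x, τ v⁆ = c • τ.symm ⁅x, τ v⁆
      rw [smul_lie, map_smul]
    lie_smul := fun c x v => by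
      show τ.symm ⁅x, τ (c • v)⁆ = c • τ.symm ⁅x, τ v⁆
      rw [map_smul, lie_smul, map_smul] }
  haveI : FiniteDimensional ℂ (ULift (Fin n → ℂ)) := Module.Finite.equiv τ.symm
  have hτ : ∀ (x : g) (v : ULift (Fin n → ℂ)), τ ⁅x, v⁆ = ⁅x, τ v⁆ :=
    fun x v => τ.apply_symm_apply _
  -- the lifted problem
  have hltY : ∀ (x : g) (t : Y ⊗[ℂ] V),
      LinearMap.lTensor Y τ.symm.toLinearMap ⁅x, t⁆ =
        ⁅x, LinearMap.lTensor Y τ.symm.toLinearMap t⁆ := by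
    intro x t
    induction t using TensorProduct.induction_on with
    | zero => simp
    | tmul y φ =>
      rw [LieModule.lie_tmul_right, map_add, LinearMap.lTensor_tmul, LinearMap.lTensor_tmul,
        LinearMap.lTensor_tmul, LieModule.lie_tmul_right]
      congr 1
      show y ⊗ₜ (τ.symm ⁅x, φ⁆) = y ⊗ₜ (τ.symm ⁅x, τ (τ.symm φ)⁆)
      rw [τ.apply_symm_apply]
    | add a b ha hb => rw [lie_add, map_add, map_add, ha, hb, lie_add]
  let ψ' : M →ₗ⁅ℂ,g⁆ Y ⊗[ℂ] ULift (Fin n → ℂ) :=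
  { toLinearMap := LinearMap.lTensor Y τ.symm.toLinearMap ∘ₗ ψ.toLinearMap
    map_lie' := by
      intro x m
      show LinearMap.lTensor Y τ.symm.toLinearMap (ψ ⁅x, m⁆) = _
      rw [ψ.map_lie, hltY]; rfl }
  obtain ⟨F', hF'⟩ := hsurjV (ULift (Fin n → ℂ)) inferInstance ψ'
  let Flin : M →ₗ[ℂ] M ⊗[ℂ] V := LinearMap.lTensor M τ.toLinearMap ∘ₗ F'.toLinearMap
  have hltM : ∀ (x : g) (t : M ⊗[ℂ] ULift (Fin n → ℂ)),
      LinearMap.lTensor M τ.toLinearMap ⁅x, t⁆ = ⁅x, LinearMap.lTensor M τ.toLinearMap t⁆ := by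
    intro x t
    induction t using TensorProduct.induction_on with
    | zero => simp
    | tmul m v =>
      rw [LieModule.lie_tmul_right, map_add, LinearMap.lTensor_tmul, LinearMap.lTensor_tmul,
        LinearMap.lTensor_tmul, LieModule.lie_tmul_right]
      congr 1
      show m ⊗ₜ (τ ⁅x, v⁆) = m ⊗ₜ ⁅x, τ v⁆
      rw [hτ]
    | add a b ha hb => rw [lie_add, map_add, map_add, ha, hb, lie_add]
  have hFlie : ∀ (x : g) (m : M), Flin ⁅x, m⁆ = ⁅x, Flin m⁆ := by
    intro x m
    show LinearMap.lTensor M τ.toLinearMap (F' ⁅x, m⁆) = _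
    rw [F'.map_lie, hltM]; rfl
  have hFpr : ∀ m : M, TensorProduct.map (pr : M →ₗ[ℂ] Y) LinearMap.id (Flin m) = ψ m := by
    intro m
    have hcomm : ∀ t : M ⊗[ℂ] ULift (Fin n → ℂ),
        TensorProduct.map (pr : M →ₗ[ℂ] Y) LinearMap.id (LinearMap.lTensor M τ.toLinearMap t) =
          LinearMap.lTensor Y τ.toLinearMap
            (TensorProduct.map (pr : M →ₗ[ℂ] Y) LinearMap.id t) := by
      intro t
      induction t using TensorProduct.induction_on with
      | zero => simp
      | tmul m v => rfl
      | add a b ha hb => rw [map_add, map_add, map_add, map_add, ha, hb]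
    have hcancel : ∀ t : Y ⊗[ℂ] V,
        LinearMap.lTensor Y τ.toLinearMap (LinearMap.lTensor Y τ.symm.toLinearMap t) = t := by
      intro t
      induction t using TensorProduct.induction_on with
      | zero => simp
      | tmul y φ =>
        rw [LinearMap.lTensor_tmul, LinearMap.lTensor_tmul]
        show y ⊗ₜ (τ (τ.symm φ)) = y ⊗ₜ φ
        rw [τ.apply_symm_apply]
      | add a b ha hb => rw [map_add, map_add, ha, hb]
    show TensorProduct.map (pr : M →ₗ[ℂ] Y) LinearMap.id
        (LinearMap.lTensor M τ.toLinearMap (F' m)) = ψ m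
    rw [hcomm, hF']
    show LinearMap.lTensor Y τ.toLinearMap (LinearMap.lTensor Y τ.symm.toLinearMap (ψ m)) = ψ m
    rw [hcancel]
  -- contraction maps
  let cm : W → (M ⊗[ℂ] V →ₗ[ℂ] M) := fun ξ =>
    (TensorProduct.rid ℂ M).toLinearMap ∘ₗ
      TensorProduct.map LinearMap.id (Module.Dual.eval ℂ W ξ)
  let cy : W → (Y ⊗[ℂ] V →ₗ[ℂ] Y) := fun ξ =>
    (TensorProduct.rid ℂ Y).toLinearMap ∘ₗ
      TensorProduct.map LinearMap.id (Module.Dual.eval ℂ W ξ)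
  have hcm_tmul : ∀ (ξ : W) (m : M) (φ : V), cm ξ (m ⊗ₜ φ) = φ ξ • m := by
    intro ξ m φ
    show (TensorProduct.rid ℂ M) (m ⊗ₜ ((Module.Dual.eval ℂ W ξ) φ)) = φ ξ • m
    rw [TensorProduct.rid_tmul]; rfl
  have hcy_tmul : ∀ (ξ : W) (y : Y) (φ : V), cy ξ (y ⊗ₜ φ) = φ ξ • y := by
    intro ξ y φ
    show (TensorProduct.rid ℂ Y) (y ⊗ₜ ((Module.Dual.eval ℂ W ξ) φ)) = φ ξ • y
    rw [TensorProduct.rid_tmul]; rfl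
  have hcm_pr : ∀ (ξ : W) (t : M ⊗[ℂ] V),
      pr (cm ξ t) = cy ξ (TensorProduct.map (pr : M →ₗ[ℂ] Y) LinearMap.id t) := by
    intro ξ t
    induction t using TensorProduct.induction_on with
    | zero => simp
    | tmul m φ => rw [hcm_tmul, map_tmul, LinearMap.id_coe, id_eq, hcy_tmul, map_smul pr]; rfl
    | add a b ha hb => rw [map_add, map_add pr, map_add, map_add, ha, hb]
  have hcy_e : ∀ (ξ : W) (t : Y ⊗[ℂ] V), cy ξ t = e t ξ := by
    intro ξ t
    induction t using TensorProduct.induction_on with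
    | zero => simp
    | tmul y φ => rw [hcy_tmul, he_tmul]
    | add a b ha hb => rw [map_add, map_add, LinearMap.add_apply, ha, hb]
  have hcm_lie : ∀ (x : g) (ξ : W) (t : M ⊗[ℂ] V),
      ⁅x, cm ξ t⁆ = cm ξ ⁅x, t⁆ + cm ⁅x, ξ⁆ t := by
    intro x ξ t
    induction t using TensorProduct.induction_on with
    | zero => simp
    | tmul m φ =>
      rw [hcm_tmul, LieModule.lie_tmul_right, map_add, hcm_tmul, hcm_tmul, hcm_tmul,
        Module.Dual.lie_apply, lie_smul]
      module
    | add a b ha hb =>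
      rw [map_add, lie_add, ha, hb, lie_add, map_add, map_add]
      abel
  have hcm_add : ∀ (ξ ξ' : W) (t : M ⊗[ℂ] V), cm (ξ + ξ') t = cm ξ t + cm ξ' t := by
    intro ξ ξ' t
    induction t using TensorProduct.induction_on with
    | zero => simp
    | tmul m φ => rw [hcm_tmul, hcm_tmul, hcm_tmul, map_add, add_smul]
    | add a b ha hb => rw [map_add, map_add, map_add, ha, hb]; abel
  have hcm_smul : ∀ (c : ℂ) (ξ : W) (t : M ⊗[ℂ] V), cm (c • ξ) t = c • cm ξ t := by
    intro c ξ t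
    induction t using TensorProduct.induction_on with
    | zero => simp
    | tmul m φ => rw [hcm_tmul, map_smul, smul_eq_mul, ← smul_smul]; rfl
    | add a b ha hb => rw [map_add, map_add, ha, hb, smul_add]
  let C : W →ₗ[ℂ] (M →ₗ[ℂ] M) :=
  { toFun := fun ξ => cm ξ ∘ₗ Flin
    map_add' := fun ξ ξ' => by ext m; exact hcm_add ξ ξ' (Flin m)
    map_smul' := fun c ξ => by ext m; exact hcm_smul c ξ (Flin m) }
  have hCinv : ∀ (x : g) (ξ : W), ⁅x, C ξ⁆ = C ⁅x, ξ⁆ := by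
    intro x ξ
    ext m
    show ⁅x, cm ξ (Flin m)⁆ - cm ξ (Flin ⁅x, m⁆) = cm ⁅x, ξ⁆ (Flin m)
    rw [hFlie, hcm_lie]
    abel
  let ξf : W := ⟨f, hfW0⟩
  obtain ⟨u, hu⟩ := hM (C ξf) ⟨LinearMap.range C, inferInstance, ⟨ξf, rfl⟩, by
    rintro x h ⟨ξ, rfl⟩
    exact ⟨⁅x, ξ⁆, (hCinv x ξ).symm⟩⟩
  refine ⟨u, ?_⟩
  ext y
  obtain ⟨m, rfl⟩ := hpr y
  calc rho g Y u (pr m) = pr (rho g M u m) := (rho_intertwine g M Y pr u m).symm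
    _ = pr (cm ξf (Flin m)) := by rw [hu]; rfl
    _ = cy ξf (TensorProduct.map (pr : M →ₗ[ℂ] Y) LinearMap.id (Flin m)) := hcm_pr ξf (Flin m)
    _ = cy ξf (ψ m) := by rw [hFpr]
    _ = e (ψ m) ξf := hcy_e ξf (ψ m)
    _ = ev (pr m) ξf := by
        show e (e.symm (ev (pr m))) ξf = ev (pr m) ξf
        rw [e.apply_symm_apply]
    _ = f (pr m) := rfl
end
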